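/- Let K be a compact Hausdorff space admitting a closeness function. Then K is first countable. -/

import Mathlib

open MeasureTheory

noncomputable section

variable {K : Type*} [TopologicalSpace K] [MeasurableSpace K]

/-- The integral of a function against a signed measure. -/
def sInt (μ : SignedMeasure K) (f : K → ℝ) : ℝ :=
  ∫ x, f x ∂μ.toJordanDecomposition.posPart - ∫ x, f x ∂μ.toJordanDecomposition.negPart

/-- The total variation norm of a signed measure. -/
def mNorm (μ : SignedMeasure K) : ℝ := (μ.totalVariation Set.univ).toReal

/-- `ν` is a compensation of `μ`: if `μ(K) > 0` then `0 ≤ ν ≤ μ⁺` and `ν(K) = μ(K)`;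
if `μ(K) ≤ 0` then `ν = 0`. -/
def IsCompensation (μ ν : SignedMeasure K) : Prop :=
  if 0 < μ Set.univ then
    0 ≤ ν ∧ ν ≤ μ.toJordanDecomposition.posPart.toSignedMeasure ∧ ν Set.univ = μ Set.univ
  else ν = 0

/-- A family of signed measures indexed by a topological space is weak*-continuous. -/
def WStarContinuousFamily {T : Type*} [TopologicalSpace T] (F : T → SignedMeasure K) : Prop :=
  ∀ g : C(K, ℝ), Continuous fun t => sInt (F t) g

/-- Membership in `W(K)`: a weak*-continuous map from `K` into the closed unit ball of the
space `M(K)` of regular Borel signed measures. -/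
def MemW (F : K → SignedMeasure K) : Prop :=
  WStarContinuousFamily F ∧ ∀ t, (F t).totalVariation.Regular ∧ mNorm (F t) ≤ 1

/-- `K` admits local compensation: every element of `W(K)` admits a compensation in `W(K)`. -/
def AdmitsLocalCompensation (K : Type*) [TopologicalSpace K] [MeasurableSpace K] : Prop :=
  ∀ F : K → SignedMeasure K, MemW F →
    ∃ G : K → SignedMeasure K, MemW G ∧ ∀ t, IsCompensation (F t) (G t)

/-- The weak* topology on signed measures. -/
instance wstarTopology : TopologicalSpace (SignedMeasure K) :=
  TopologicalSpace.induced (fun μ (g : C(K, ℝ)) => sInt μ g) inferInstance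

/-- `M(K)`: the regular Borel signed measures on `K`, with the weak* topology. -/
def MK (K : Type*) [TopologicalSpace K] [MeasurableSpace K] : Type _ :=
  {μ : SignedMeasure K // μ.totalVariation.Regular}

instance : TopologicalSpace (MK K) := instTopologicalSpaceSubtype

/-- The closed unit ball `B_{M(K)}` of `M(K)`, with the weak* topology. -/
def BMK (K : Type*) [TopologicalSpace K] [MeasurableSpace K] : Type _ :=
  {μ : SignedMeasure K // μ.totalVariation.Regular ∧ mNorm μ ≤ 1}

instance : TopologicalSpace (BMK K) := instTopologicalSpaceSubtype

/-- A compensation function on `K`: a weak*-to-weak*-continuous map `ξ : M(K) → M(K)` such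
that `ξ μ` is a compensation of `μ` for every `μ ∈ M(K)`. -/
def IsCompensationFunction (ξ : MK K → MK K) : Prop :=
  Continuous ξ ∧ ∀ μ : MK K, IsCompensation μ.1 (ξ μ).1

/-- A `B_{M(K)}`-compensation function on `K`. -/
def IsBallCompensationFunction (ξ : BMK K → MK K) : Prop :=
  Continuous ξ ∧ ∀ μ : BMK K, IsCompensation μ.1 (ξ μ).1

/-- The numerical radius of an operator on a real Banach space. -/
def NumericalRadius {X : Type*} [NormedAddCommGroup X] [NormedSpace ℝ X] (T : X →L[ℝ] X) : ℝ :=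
  sSup {r | ∃ (x : X) (φ : X →L[ℝ] ℝ), ‖x‖ = 1 ∧ ‖φ‖ = 1 ∧ φ x = 1 ∧ r = |φ (T x)|}

/-- The Bishop-Phelps-Bollobás property for numerical radius, witnessed by a
given function `δ`. -/
def HasBPBNumericalRadiusWith (X : Type*) [NormedAddCommGroup X] [NormedSpace ℝ X]
    (δ : ℝ → ℝ) : Prop :=
  ∀ ε : ℝ, 0 < ε → ε < 1 →
    ∀ T : X →L[ℝ] X, NumericalRadius T = 1 →
      ∀ (x : X) (φ : X →L[ℝ] ℝ), ‖x‖ = 1 → ‖φ‖ = 1 → φ x = 1 →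
        1 - δ ε ≤ φ (T x) →
        ∃ (T₀ : X →L[ℝ] X) (x₀ : X) (φ₀ : X →L[ℝ] ℝ),
          NumericalRadius T₀ = 1 ∧ ‖x₀‖ = 1 ∧ ‖φ₀‖ = 1 ∧ φ₀ x₀ = 1 ∧
          φ₀ (T₀ x₀) = 1 ∧ NumericalRadius (T - T₀) ≤ ε ∧ ‖x - x₀‖ ≤ ε ∧ ‖φ - φ₀‖ ≤ ε

/-- The Bishop-Phelps-Bollobás property for numerical radius. -/
def HasBPBNumericalRadius (X : Type*) [NormedAddCommGroup X] [NormedSpace ℝ X] : Prop :=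
  ∃ δ : ℝ → ℝ, (∀ ε : ℝ, 0 < ε → ε < 1 → 0 < δ ε ∧ δ ε < 1) ∧ HasBPBNumericalRadiusWith X δ

/-- A closeness function for `K`: a continuous function `c` on
`{(x,y,z) ∈ K³ : y ≠ z}` with values in `[-1,1]` such that `c(x,y,z) = -c(x,z,y)`
whenever `y ≠ z` and `c(x,x,z) = 1` whenever `x ≠ z`. -/
def IsClosenessFunction (K : Type*) [TopologicalSpace K]
    (c : {p : K × K × K // p.2.1 ≠ p.2.2} → ℝ) : Prop :=
  Continuous c ∧ (∀ p, c p ∈ Set.Icc (-1 : ℝ) 1) ∧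
    (∀ (x y z : K) (h : y ≠ z), c ⟨(x, y, z), h⟩ = -c ⟨(x, z, y), h.symm⟩) ∧
    (∀ (x z : K) (h : x ≠ z), c ⟨(x, x, z), h⟩ = 1)

section Stmt14Aux

open Filter Topology Set

variable {X : Type*} [TopologicalSpace X]

/-- In a compact Hausdorff space, a point which is a countable intersection of open sets
has countably generated neighborhood filter. -/
lemma aux_isCG_of_gdelta [CompactSpace X] [T2Space X] (p : X) (U : ℕ → Set X)
    (ho : ∀ n, IsOpen (U n)) (hp : ∀ n, p ∈ U n) (hs : (⋂ n, U n) = {p}) :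
    (𝓝 p).IsCountablyGenerated := by
  have hshrink : ∀ W : {A : Set X // IsOpen A ∧ p ∈ A}, ∀ n : ℕ,
      ∃ V : {A : Set X // IsOpen A ∧ p ∈ A}, closure V.1 ⊆ W.1 ∩ U n := by
    intro W n
    obtain ⟨V, hVo, hsub, hcl, -⟩ := exists_open_between_and_isCompact_closure
      (isCompact_singleton (x := p)) (W.2.1.inter (ho n))
      (by simp [W.2.2, hp n])
    exact ⟨⟨V, hVo, hsub rfl⟩, hcl⟩
  choose f hf using hshrink
  set V : ℕ → {A : Set X // IsOpen A ∧ p ∈ A} :=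
    fun n => Nat.rec ⟨U 0, ho 0, hp 0⟩ (fun n W => f W (n + 1)) n with hV
  have hVsucc : ∀ n, closure (V (n + 1)).1 ⊆ (V n).1 ∩ U (n + 1) := fun n => hf (V n) (n + 1)
  have hbasis : (𝓝 p).HasBasis (fun _ : ℕ => True) (fun n => (V n).1) := by
    constructor
    intro t
    constructor
    · intro ht
      obtain ⟨O, hOt, hOopen, hpO⟩ := mem_nhds_iff.mp ht
      by_contra hno
      push_neg at hno
      -- the closed sets closure (V (n+1)) \ O are nonempty
      have hnonempty : ∀ n, (closure (V (n + 1)).1 \ O).Nonempty := by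
        intro n
        rcases (closure (V (n + 1)).1 \ O).eq_empty_or_nonempty with hemp | hne
        · exfalso
          have : (V (n + 1)).1 ⊆ t := by
            intro x hx
            by_cases hxO : x ∈ O
            · exact hOt hxO
            · exact absurd (by exact ⟨subset_closure hx, hxO⟩ :
                x ∈ closure (V (n + 1)).1 \ O) (by simp [hemp])
          exact hno (n + 1) trivial this
        · exact hne
      have hdec : ∀ n, (closure (V (n + 2)).1 \ O) ⊆ (closure (V (n + 1)).1 \ O) := by
        intro n x hx
        exact ⟨subset_closure (((hVsucc (n + 1)) hx.1).1), hx.2⟩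
      have hint : (⋂ n, (closure (V (n + 1)).1 \ O)).Nonempty := by
        apply IsCompact.nonempty_iInter_of_sequence_nonempty_isCompact_isClosed
          (fun n => closure (V (n + 1)).1 \ O) hdec hnonempty
        · exact (isClosed_closure.sdiff hOopen).isCompact
        · exact fun i => isClosed_closure.sdiff hOopen
      obtain ⟨x, hx⟩ := hint
      simp only [Set.mem_iInter, Set.mem_diff] at hx
      have hxU : x ∈ ⋂ n, U n := by
        refine Set.mem_iInter.mpr fun n => ?_
        rcases n with - | m
        · -- x ∈ U 0 = (V 0).1, via closure (V 1) ⊆ V 0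
          exact ((hVsucc 0) (hx 0).1).1
        · exact ((hVsucc m) (hx m).1).2
      rw [hs] at hxU
      have : x ∈ O := by rw [Set.mem_singleton_iff.mp hxU]; exact hpO
      exact (hx 0).2 this
    · rintro ⟨n, -, hsub⟩
      exact Filter.mem_of_superset ((V n).2.1.mem_nhds (V n).2.2) hsub
  exact hbasis.isCountablyGenerated

/-- Extracting a product neighborhood from continuity of the closeness function. -/
lemma aux_approx (c : {p : X × X × X // p.2.1 ≠ p.2.2} → ℝ) (hc : Continuous c)
    {T : Set ℝ} (hT : IsOpen T) {x y z : X} (h : y ≠ z) (hv : c ⟨(x, y, z), h⟩ ∈ T) :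
    ∃ A B C : Set X, IsOpen A ∧ IsOpen B ∧ IsOpen C ∧ x ∈ A ∧ y ∈ B ∧ z ∈ C ∧
      ∀ a ∈ A, ∀ b ∈ B, ∀ d ∈ C, ∀ (h' : b ≠ d), c ⟨(a, b, d), h'⟩ ∈ T := by
  have hN : c ⁻¹' T ∈ 𝓝 (⟨(x, y, z), h⟩ : {p : X × X × X // p.2.1 ≠ p.2.2}) :=
    hc.continuousAt.preimage_mem_nhds (hT.mem_nhds hv)
  rw [nhds_subtype_eq_comap, Filter.mem_comap] at hN
  obtain ⟨N, hN𝓝, hNsub⟩ := hN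
  rw [mem_nhds_prod_iff] at hN𝓝
  obtain ⟨A₀, hA₀, W, hW, hAW⟩ := hN𝓝
  rw [mem_nhds_prod_iff] at hW
  obtain ⟨B₀, hB₀, C₀, hC₀, hBC⟩ := hW
  obtain ⟨A, hAsub, hAo, hxA⟩ := mem_nhds_iff.mp hA₀
  obtain ⟨B, hBsub, hBo, hyB⟩ := mem_nhds_iff.mp hB₀
  obtain ⟨C, hCsub, hCo, hzC⟩ := mem_nhds_iff.mp hC₀
  refine ⟨A, B, C, hAo, hBo, hCo, hxA, hyB, hzC, fun a ha b hb d hd h' => ?_⟩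
  have : ((a, b, d) : X × X × X) ∈ N :=
    hAW ⟨hAsub ha, hBC ⟨hBsub hb, hCsub hd⟩⟩
  exact hNsub this

/-- The main construction: if `{p}` is not a countable intersection of open sets, a
closeness function yields a contradiction. -/
lemma aux_main [CompactSpace X] [T2Space X]
    (c : {p : X × X × X // p.2.1 ≠ p.2.2} → ℝ) (hc : IsClosenessFunction X c) (p : X)
    (H : ∀ U : ℕ → Set X, (∀ n, IsOpen (U n) ∧ p ∈ U n) →
      ∃ q, (∀ n, q ∈ U n) ∧ q ≠ p) : False := by
  obtain ⟨hcont, -, hanti, hnorm⟩ := hc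
  -- the step of the recursion
  have step : ∀ W : {A : Set X // IsOpen A ∧ p ∈ A},
      ∃ (q : X) (U : {A : Set X // IsOpen A ∧ p ∈ A}), q ∈ W.1 ∧ q ≠ p ∧ U.1 ⊆ W.1 ∧
        (∀ a ∈ U.1, ∀ b ∈ U.1, ∀ (hbq : b ≠ q), c ⟨(a, b, q), hbq⟩ > 1/2) ∧
        (∀ a ∈ U.1, ∀ d ∈ U.1, ∀ (hqd : q ≠ d), c ⟨(a, q, d), hqd⟩ < -(1/2)) := by
    intro W
    obtain ⟨q, hqW, hqp⟩ := H (fun _ => W.1) (fun _ => W.2)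
    have hpq : p ≠ q := hqp.symm
    have hval1 : c ⟨(p, p, q), hpq⟩ ∈ Set.Ioi (1/2 : ℝ) := by
      rw [hnorm p q hpq]; norm_num
    obtain ⟨A₁, B₁, C₁, hA₁, hB₁, hC₁, hpA₁, hpB₁, hqC₁, hP₁⟩ :=
      aux_approx c hcont isOpen_Ioi hpq hval1
    have hval2 : c ⟨(p, q, p), hqp⟩ ∈ Set.Iio (-(1/2) : ℝ) := by
      rw [hanti p q p hqp, hnorm p q hpq]; norm_num
    obtain ⟨A₂, B₂, C₂, hA₂, hB₂, hC₂, hpA₂, hqB₂, hpC₂, hP₂⟩ :=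
      aux_approx c hcont isOpen_Iio hqp hval2
    refine ⟨q, ⟨W.1 ∩ (A₁ ∩ B₁) ∩ (A₂ ∩ C₂),
      ((W.2.1.inter (hA₁.inter hB₁)).inter (hA₂.inter hC₂)),
      ⟨⟨W.2.2, hpA₁, hpB₁⟩, hpA₂, hpC₂⟩⟩, hqW 0, hqp,
      fun x hx => hx.1.1, ?_, ?_⟩
    · intro a ha b hb hbq
      exact hP₁ a ha.1.2.1 b hb.1.2.2 q hqC₁ hbq
    · intro a ha d hd hqd
      exact hP₂ a ha.2.1 q hqB₂ d hd.2.2 hqd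
  choose qf Uf hqmem hqne hsub hR1 hR2 using step
  -- the recursion
  set st : ℕ → {A : Set X // IsOpen A ∧ p ∈ A} :=
    fun n => Nat.rec ⟨Set.univ, isOpen_univ, Set.mem_univ p⟩ (fun _ W => Uf W) n with hst
  set Q : ℕ → X := fun n => qf (st n) with hQ
  have hstsucc : ∀ n, st (n + 1) = Uf (st n) := fun _ => rfl
  have hmono : ∀ m n, m ≤ n → (st n).1 ⊆ (st m).1 := by
    intro m n hmn
    induction n with
    | zero => rw [Nat.le_zero.mp hmn]
    | succ k ih =>
      rcases Nat.lt_or_ge m (k + 1) with hlt | hge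
      · exact (hsub (st k)).trans (ih (Nat.lt_succ_iff.mp hlt))
      · have : m = k + 1 := le_antisymm hmn hge
        subst this; exact subset_rfl
  have hQst : ∀ n, Q n ∈ (st n).1 := fun n => hqmem (st n)
  have hQp : ∀ n, Q n ≠ p := fun n => hqne (st n)
  have hstep1 : ∀ n, ∀ a ∈ (st (n + 1)).1, ∀ b ∈ (st (n + 1)).1, ∀ (hbq : b ≠ Q n),
      c ⟨(a, b, Q n), hbq⟩ > 1/2 := fun n => by rw [hstsucc n]; exact hR1 (st n)
  have hstep2 : ∀ n, ∀ a ∈ (st (n + 1)).1, ∀ d ∈ (st (n + 1)).1, ∀ (hqd : Q n ≠ d),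
      c ⟨(a, Q n, d), hqd⟩ < -(1/2) := fun n => by rw [hstsucc n]; exact hR2 (st n)
  have hpst : ∀ n, p ∈ (st n).1 := fun n => (st n).2.2
  by_cases hA : ∃ r, r ≠ p ∧ MapClusterPt r atTop Q
  · -- Case A: a cluster point r ≠ p
    obtain ⟨r, hrp, hcl⟩ := hA
    set L : Filter ℕ := atTop ⊓ comap Q (𝓝 r) with hL
    have hmapL : Filter.map Q L = Filter.map Q atTop ⊓ 𝓝 r := Filter.push_pull Q atTop (𝓝 r)
    haveI hLne : L.NeBot := by
      rw [← Filter.map_neBot_iff Q, hmapL, inf_comm]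
      exact hcl
    have hQtend : Tendsto Q L (𝓝 r) := tendsto_iff_comap.mpr inf_le_right
    have hA1 : ∀ m, c ⟨(r, p, Q m), (hQp m).symm⟩ ≥ 1/2 := by
      intro m
      have key : c ⟨(r, Q m, p), hQp m⟩ ≤ -(1/2) := by
        have htt : Tendsto (fun n => (⟨(Q n, Q m, p), hQp m⟩ :
            {q : X × X × X // q.2.1 ≠ q.2.2})) L (𝓝 ⟨(r, Q m, p), hQp m⟩) := by
          rw [tendsto_subtype_rng]
          exact hQtend.prodMk_nhds tendsto_const_nhds
        have hev : ∀ᶠ n in L, c ⟨(Q n, Q m, p), hQp m⟩ ≤ -(1/2) := by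
          have hge : ∀ᶠ n in L, n ≥ m + 1 :=
            (eventually_ge_atTop (m + 1)).filter_mono inf_le_left
          filter_upwards [hge] with n hn
          have hQn : Q n ∈ (st (m + 1)).1 := hmono (m + 1) n hn (hQst n)
          exact le_of_lt (hstep2 m (Q n) hQn p (hpst (m + 1)) (hQp m))
        exact le_of_tendsto ((hcont.tendsto _).comp htt) hev
      have := hanti r (Q m) p (hQp m)
      linarith
    have hA2 : c ⟨(r, p, r), hrp.symm⟩ ≥ 1/2 := by
      have htt : Tendsto (fun m => (⟨(r, p, Q m), (hQp m).symm⟩ :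
          {q : X × X × X // q.2.1 ≠ q.2.2})) L (𝓝 ⟨(r, p, r), hrp.symm⟩) := by
        rw [tendsto_subtype_rng]
        exact tendsto_const_nhds.prodMk_nhds (tendsto_const_nhds.prodMk_nhds hQtend)
      exact ge_of_tendsto ((hcont.tendsto _).comp htt) (Filter.Eventually.of_forall hA1)
    have hfin : c ⟨(r, p, r), hrp.symm⟩ = -1 := by
      rw [hanti r p r hrp.symm, hnorm r p hrp]
    rw [hfin] at hA2
    linarith
  · -- Case B: Q tends to p
    push_neg at hA
    have hB : Tendsto Q atTop (𝓝 p) := by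
      rw [(nhds_basis_opens p).tendsto_right_iff]
      by_contra hnt
      push_neg at hnt
      obtain ⟨V, ⟨hpV, hVo⟩, hfreq⟩ := hnt
      have hne : (atTop ⊓ 𝓟 {n | ¬ Q n ∈ V}).NeBot := Filter.frequently_iff_neBot.mp hfreq
      haveI := hne
      haveI : (Filter.map Q (atTop ⊓ 𝓟 {n | ¬ Q n ∈ V})).NeBot := Filter.map_neBot
      obtain ⟨r, hr⟩ := exists_clusterPt_of_compactSpace
        (Filter.map Q (atTop ⊓ 𝓟 {n | ¬ Q n ∈ V}))
      have hrV : r ∈ Vᶜ := by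
        have hle : Filter.map Q (atTop ⊓ 𝓟 {n | ¬ Q n ∈ V}) ≤ 𝓟 Vᶜ := by
          rw [Filter.le_principal_iff]
          refine Filter.mem_map.mpr (Filter.mem_of_superset
            (Filter.mem_inf_of_right (Filter.mem_principal_self _)) ?_)
          intro n hn
          exact hn
        have : ClusterPt r (𝓟 Vᶜ) := hr.mono hle
        rw [← mem_closure_iff_clusterPt] at this
        rwa [hVo.isClosed_compl.closure_eq] at this
      have hrp : r ≠ p := fun h => hrV (h ▸ hpV)
      have hcl : MapClusterPt r atTop Q :=
        hr.mono (Filter.map_mono inf_le_left)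
      exact hA r hrp hcl
    obtain ⟨qs, hqs, hqsp⟩ := H (fun n => (st (n + 1)).1 ∩ {Q n}ᶜ)
      (fun n => ⟨(st (n + 1)).2.1.inter isOpen_compl_singleton,
        hpst (n + 1), fun h => (hQp n) (Set.mem_singleton_iff.mp h).symm⟩)
    have hqsQ : ∀ n, qs ≠ Q n := fun n h => (hqs n).2 (Set.mem_singleton_iff.mpr h)
    have hneg : ∀ m, c ⟨(p, Q m, qs), (hqsQ m).symm⟩ ≤ -(1/2) := by
      intro m
      have h1 : c ⟨(p, qs, Q m), hqsQ m⟩ > 1/2 :=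
        hstep1 m p (hpst (m + 1)) qs (hqs m).1 (hqsQ m)
      have := hanti p (Q m) qs (hqsQ m).symm
      linarith
    have htt : Tendsto (fun m => (⟨(p, Q m, qs), (hqsQ m).symm⟩ :
        {q : X × X × X // q.2.1 ≠ q.2.2})) atTop (𝓝 ⟨(p, p, qs), hqsp.symm⟩) := by
      rw [tendsto_subtype_rng]
      exact tendsto_const_nhds.prodMk_nhds (hB.prodMk_nhds tendsto_const_nhds)
    have hlim : c ⟨(p, p, qs), hqsp.symm⟩ ≤ -(1/2) :=
      le_of_tendsto ((hcont.tendsto _).comp htt) (Filter.Eventually.of_forall hneg)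
    rw [hnorm p qs hqsp.symm] at hlim
    linarith

end Stmt14Aux

/-- A compact Hausdorff space admitting a closeness function is first
countable. -/
theorem stmt14 (K : Type*) [TopologicalSpace K] [CompactSpace K] [T2Space K]
    (h : ∃ c : {p : K × K × K // p.2.1 ≠ p.2.2} → ℝ, IsClosenessFunction K c) :
    FirstCountableTopology K := by
  obtain ⟨c, hc⟩ := h
  constructor
  intro p
  suffices hGd : ∃ U : ℕ → Set K, (∀ n, IsOpen (U n) ∧ p ∈ U n) ∧ (⋂ n, U n) = {p} by
    obtain ⟨U, h1, h2⟩ := hGd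
    exact aux_isCG_of_gdelta p U (fun n => (h1 n).1) (fun n => (h1 n).2) h2
  by_contra h0
  push_neg at h0
  have H : ∀ U : ℕ → Set K, (∀ n, IsOpen (U n) ∧ p ∈ U n) →
      ∃ q, (∀ n, q ∈ U n) ∧ q ≠ p := by
    intro U hU
    have hne := h0 U hU
    have hsub : ({p} : Set K) ⊆ ⋂ n, U n :=
      Set.singleton_subset_iff.mpr (Set.mem_iInter.mpr fun n => (hU n).2)
    obtain ⟨q, hq1, hq2⟩ := Set.exists_of_ssubset ⟨hsub, fun hle => hne
      (le_antisymm hle hsub)⟩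
    exact ⟨q, Set.mem_iInter.mp hq1, fun h => hq2 (h ▸ rfl)⟩
  exact absurd (aux_main c hc p H) not_false

end
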